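/- Let n ≥ 3, let η = e^{2πi/n}, and let S be the list of polynomials 1, q, q², together with η^{j}q for j = 2, 3, …, n−2 (the parameters of the cyclotomic Hecke algebra of the principal Φ_n^{(1)}-block of I₂(n,q)). Then one has the identity in ℂ[q]: (∏_{u ∈ S, u ≠ 1} u) · ∏_{u ∈ S, u ≠ q²} (q² − u) = q^{n} · (∏_{u ∈ S, u ≠ q²} u) · ∏_{u ∈ S, u ≠ 1} (1 − u). Equivalently, the relative degrees R_v = ∏_{u ∈ S, u ≠ v} u/(v − u) attached to the parameters v = 1 and v = q² satisfy R_1 = q^{n} · R_{q²} as rational functions in q. -/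

import Mathlib

open Polynomial

/-- Let `n ≥ 3`, `η = e^{2πi/n}`, and let `S` be the parameters `1, q, q²` together with `ηʲq`
for `j = 2, …, n−2` of the cyclotomic Hecke algebra of the principal `Φ_n^{(1)}`-block of
`I₂(n,q)`. Then `(∏_{u∈S, u≠1} u)·∏_{u∈S, u≠q²}(q² − u) = qⁿ·(∏_{u∈S, u≠q²} u)·∏_{u∈S, u≠1}(1 − u)`
in `ℂ[q]`; equivalently, the relative degrees of the parameters `1` and `q²` satisfy
`R_1 = qⁿ·R_{q²}`. -/
theorem heckeParams_relativeDegree_ratio (n : ℕ) (hn : 3 ≤ n) (η : ℂ)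
    (hη : η = Complex.exp (2 * Real.pi * Complex.I / (n : ℂ))) :
    ((X : ℂ[X]) * X ^ 2 * ∏ j ∈ Finset.Icc 2 (n - 2), (C (η ^ j) * X)) *
      ((X ^ 2 - 1) * (X ^ 2 - X) * ∏ j ∈ Finset.Icc 2 (n - 2), (X ^ 2 - C (η ^ j) * X)) =
    (X : ℂ[X]) ^ n * (1 * X * ∏ j ∈ Finset.Icc 2 (n - 2), (C (η ^ j) * X)) *
      ((1 - X) * (1 - X ^ 2) * ∏ j ∈ Finset.Icc 2 (n - 2), (1 - C (η ^ j) * X)) := by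
  obtain ⟨m, rfl⟩ : ∃ m, n = m + 3 := ⟨n - 3, by omega⟩
  have hn0 : ((m + 3 : ℕ) : ℂ) ≠ 0 := Nat.cast_ne_zero.mpr (by omega)
  have hηn : η ^ (m + 3) = 1 := by
    rw [hη, ← Complex.exp_nat_mul,
      show ((m + 3 : ℕ) : ℂ) * (2 * Real.pi * Complex.I / ((m + 3 : ℕ) : ℂ))
        = 2 * Real.pi * Complex.I from by rw [mul_comm, div_mul_cancel₀ _ hn0],
      Complex.exp_two_pi_mul_I]
  -- Gauss sum
  have hs : (∑ j ∈ Finset.Icc 2 (m + 1), j) * 2 = (m + 3) * m := by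
    have h1 := Finset.sum_range_id_mul_two (m + 2)
    have h2 : ∑ j ∈ Finset.range (m + 2), j
        = (∑ j ∈ Finset.Ico 0 2, j) + ∑ j ∈ Finset.Icc 2 (m + 1), j := by
      rw [Finset.range_eq_Ico, show Finset.Icc 2 (m+1) = Finset.Ico 2 (m+2) from by
        ext x; simp only [Finset.mem_Icc, Finset.mem_Ico]; omega]
      exact (Finset.sum_Ico_consecutive _ (by omega) (by omega)).symm
    have h3 : (∑ j ∈ Finset.Ico 0 2, j) = 1 := by decide
    have h4 : (m + 2) * (m + 2 - 1) = (m + 3) * m + 2 := by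
      rw [show m + 2 - 1 = m + 1 from rfl]; ring
    omega
  -- η ^ (sum) = (-1)^m
  have hkey : η ^ (∑ j ∈ Finset.Icc 2 (m + 1), j) = (-1 : ℂ) ^ m := by
    rcases Nat.even_or_odd m with ⟨k, hk⟩ | ⟨k, hk⟩
    · have he : (∑ j ∈ Finset.Icc 2 (m + 1), j) = (m + 3) * k := by
        have h5 : (m + 3) * m = ((m + 3) * k) * 2 := by rw [hk]; ring
        omega
      rw [he, pow_mul, hηn, one_pow, hk]
      rw [← two_mul, pow_mul]; norm_num
    · have hhalf : η ^ (k + 2) = -1 := by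
        rw [hη, ← Complex.exp_nat_mul,
          show ((k + 2 : ℕ) : ℂ) * (2 * Real.pi * Complex.I / ((m + 3 : ℕ) : ℂ))
            = Real.pi * Complex.I from by
            have hc : ((m + 3 : ℕ) : ℂ) = 2 * ((k + 2 : ℕ) : ℂ) := by push_cast [hk]; ring
            have hk0 : ((k + 2 : ℕ) : ℂ) ≠ 0 := Nat.cast_ne_zero.mpr (by omega)
            rw [hc, show (2 : ℂ) * Real.pi * Complex.I / (2 * ((k + 2 : ℕ) : ℂ))
                = Real.pi * Complex.I / ((k + 2 : ℕ) : ℂ) from by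
              rw [mul_assoc, mul_div_mul_left _ _ (two_ne_zero)],
              mul_comm, div_mul_cancel₀ _ hk0],
          Complex.exp_pi_mul_I]
      have he : (∑ j ∈ Finset.Icc 2 (m + 1), j) = (k + 2) * m := by
        have h5 : (m + 3) * m = ((k + 2) * m) * 2 := by rw [hk]; ring
        omega
      rw [he, pow_mul, hhalf]
  have hcard : (Finset.Icc 2 (m + 1)).card = m := by rw [Nat.card_Icc]; omega
  -- key product identity
  have hprod1 : ∏ j ∈ Finset.Icc 2 (m + 1), ((1 : ℂ[X]) - C (η ^ j) * X)
      = ∏ j ∈ Finset.Icc 2 (m + 1), ((X : ℂ[X]) - C (η ^ j)) := by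
    have hfac : ∀ j ∈ Finset.Icc 2 (m + 1),
        (1 : ℂ[X]) - C (η ^ j) * X = C (-η ^ j) * ((X : ℂ[X]) - C (η ^ (m + 3 - j))) := by
      intro j hj
      simp only [Finset.mem_Icc] at hj
      have hj' : η ^ j * η ^ (m + 3 - j) = 1 := by
        rw [← pow_add, show j + (m + 3 - j) = m + 3 from by omega, hηn]
      rw [mul_sub, ← C_mul, show (-η ^ j) * η ^ (m + 3 - j) = -1 from by rw [neg_mul, hj']]
      simp only [map_neg, map_one]
      ring
    rw [Finset.prod_congr rfl hfac, Finset.prod_mul_distrib]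
    have h1 : ∏ j ∈ Finset.Icc 2 (m + 1), C (-η ^ j : ℂ) = (1 : ℂ[X]) := by
      rw [← map_prod]
      have : ∏ j ∈ Finset.Icc 2 (m + 1), (-η ^ j) = (-1 : ℂ) ^ m * η ^ (∑ j ∈ Finset.Icc 2 (m+1), j) := by
        rw [Finset.prod_congr rfl (fun j _ => show (-η ^ j) = (-1) * η ^ j from by ring),
          Finset.prod_mul_distrib, Finset.prod_const, hcard, Finset.prod_pow_eq_pow_sum]
      rw [this, hkey, ← pow_add, ← two_mul, pow_mul]
      norm_num
    have h2 : ∏ j ∈ Finset.Icc 2 (m + 1), ((X : ℂ[X]) - C (η ^ (m + 3 - j)))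
        = ∏ j ∈ Finset.Icc 2 (m + 1), ((X : ℂ[X]) - C (η ^ j)) := by
      refine Finset.prod_nbij' (fun j => m + 3 - j) (fun j => m + 3 - j) ?_ ?_ ?_ ?_ ?_ <;>
        (intro a ha; simp only [Finset.mem_Icc] at ha; first | rfl | omega | (simp only [Finset.mem_Icc]; omega))
    rw [h1, h2, one_mul]
  -- now the main computation
  simp only [show m + 3 - 2 = m + 1 from by omega]
  have hprod2 : ∏ j ∈ Finset.Icc 2 (m + 1), ((X : ℂ[X]) ^ 2 - C (η ^ j) * X)
      = X ^ m * ∏ j ∈ Finset.Icc 2 (m + 1), ((X : ℂ[X]) - C (η ^ j)) := by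
    rw [Finset.prod_congr rfl (fun j _ => show (X : ℂ[X]) ^ 2 - C (η ^ j) * X
        = X * ((X : ℂ[X]) - C (η ^ j)) from by ring), Finset.prod_mul_distrib,
      Finset.prod_const, hcard]
  rw [hprod1, hprod2]
  ring
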